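/- Proximity of the barrier-modified minimizer (Lemma 1): Suppose θ* ∈ S. Then there exist μ* > 0, C > 0, and a map μ ↦ θ̂_μ defined for μ ∈ (0, μ*) such that for every μ ∈ (0, μ*): θ̂_μ ∈ S, θ̂_μ is a local minimizer of Ĵ_μ (in particular ∇Ĵ_μ(θ̂_μ) = 0), and ‖θ̂_μ − θ*‖ ≤ C·μ. -/

import Mathlib

open Real Set
open scoped RealInnerProductSpace

lemma aux_eig {n : ℕ} (hn : 1 ≤ n)
    (H : EuclideanSpace ℝ (Fin n) →L[ℝ] EuclideanSpace ℝ (Fin n))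
    (Hpos : ∀ x : EuclideanSpace ℝ (Fin n), x ≠ 0 → 0 < ⟪x, H x⟫) :
    ∃ lam > 0, ∀ x : EuclideanSpace ℝ (Fin n), lam * ‖x‖ ^ 2 ≤ ⟪x, H x⟫ := by
  have hi : Fin n := ⟨0, hn⟩
  have hsne : (Metric.sphere (0 : EuclideanSpace ℝ (Fin n)) 1).Nonempty := by
    refine ⟨EuclideanSpace.single hi 1, ?_⟩
    simp [EuclideanSpace.norm_single]
  have hcont : Continuous fun x : EuclideanSpace ℝ (Fin n) => ⟪x, H x⟫ :=
    continuous_id.inner H.continuous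
  obtain ⟨x0, hx0, hmin⟩ :=
    (isCompact_sphere (0 : EuclideanSpace ℝ (Fin n)) 1).exists_isMinOn hsne hcont.continuousOn
  have hx0n : ‖x0‖ = 1 := by simpa using hx0
  have hx0ne : x0 ≠ 0 := by
    intro h0; rw [h0] at hx0n; simp at hx0n
  refine ⟨⟪x0, H x0⟫, Hpos x0 hx0ne, fun x => ?_⟩
  by_cases hx : x = 0
  · simp [hx]
  · have hxn : 0 < ‖x‖ := norm_pos_iff.mpr hx
    have hu : ‖x‖⁻¹ • x ∈ Metric.sphere (0 : EuclideanSpace ℝ (Fin n)) 1 := by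
      simp [norm_smul, abs_of_pos hxn, inv_mul_cancel₀ hxn.ne']
    have hle : ⟪x0, H x0⟫ ≤ ⟪‖x‖⁻¹ • x, H (‖x‖⁻¹ • x)⟫ := hmin hu
    rw [map_smul, real_inner_smul_left, real_inner_smul_right] at hle
    have h4 := mul_le_mul_of_nonneg_left hle (sq_nonneg ‖x‖)
    have h5 : ‖x‖ ^ 2 * (‖x‖⁻¹ * (‖x‖⁻¹ * ⟪x, H x⟫)) = ⟪x, H x⟫ := by
      field_simp
    rw [h5] at h4
    linarith [h4]

theorem proximity_of_modified_minimizer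
    {n : ℕ} (hn : 1 ≤ n)
    (Jstar : ℝ) (θs : EuclideanSpace ℝ (Fin n))
    (H : EuclideanSpace ℝ (Fin n) →L[ℝ] EuclideanSpace ℝ (Fin n))
    (Hsymm : ∀ x y : EuclideanSpace ℝ (Fin n), ⟪H x, y⟫ = ⟪x, H y⟫)
    (Hpos : ∀ x : EuclideanSpace ℝ (Fin n), x ≠ 0 → 0 < ⟪x, H x⟫)
    (J : EuclideanSpace ℝ (Fin n) → ℝ)
    (hJdef : ∀ θ, J θ = Jstar + (1 / 2) * ⟪θ - θs, H (θ - θs)⟫)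
    (h : EuclideanSpace ℝ (Fin n) → ℝ) (hh : ContDiff ℝ 2 h)
    (S : Set (EuclideanSpace ℝ (Fin n))) (hSdef : S = {θ | 0 < h θ})
    (hSne : S.Nonempty)
    (hbdry : IsCompact (frontier S))
    (hgradne : ∀ θ ∈ frontier S, gradient h θ ≠ 0)
    (hsub : ∀ c : ℝ, IsCompact {θ | h θ ≤ c})
    (Jhat : ℝ → EuclideanSpace ℝ (Fin n) → ℝ)
    (hJhatdef : ∀ μ θ, Jhat μ θ = J θ - μ * Real.log (h θ))
    (hθsS : θs ∈ S) :
    ∃ μstar > 0, ∃ C > 0, ∃ θhat : ℝ → EuclideanSpace ℝ (Fin n),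
      ∀ μ ∈ Set.Ioo 0 μstar,
        θhat μ ∈ S ∧ IsLocalMin (Jhat μ) (θhat μ) ∧
        gradient (Jhat μ) (θhat μ) = 0 ∧ ‖θhat μ - θs‖ ≤ C * μ := by
  have hhc : Continuous h := hh.continuous
  have hpos : 0 < h θs := by rw [hSdef] at hθsS; exact hθsS
  have hSopen : IsOpen S := by
    rw [hSdef]; exact isOpen_lt continuous_const hhc
  -- eigenvalue lower bound
  obtain ⟨lam, hlam, hlb⟩ := aux_eig hn H Hpos
  -- Lipschitz bound for log ∘ h near θs
  have hgC : ContDiffAt ℝ 1 (fun θ => Real.log (h θ)) θs :=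
    (Real.contDiffAt_log.mpr hpos.ne').comp θs (hh.contDiffAt.of_le (by norm_num))
  obtain ⟨K, t, ht, hK⟩ := hgC.exists_lipschitzOnWith
  -- choose radius r
  obtain ⟨r, hr, hball⟩ : ∃ r > 0, Metric.closedBall θs r ⊆ t ∩ S := by
    have hmem : t ∩ S ∈ nhds θs := Filter.inter_mem ht (hSopen.mem_nhds hθsS)
    rcases Metric.nhds_basis_closedBall.mem_iff.mp hmem with ⟨r, hr, hsb⟩
    exact ⟨r, hr, hsb⟩
  set B := Metric.closedBall θs r with hB
  have hBS : B ⊆ S := fun x hx => (hball hx).2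
  have hBt : B ⊆ t := fun x hx => (hball hx).1
  have hposB : ∀ θ ∈ B, 0 < h θ := fun θ hθ => by
    have := hBS hθ; rwa [hSdef] at this
  have hθsB : θs ∈ B := Metric.mem_closedBall_self hr.le
  -- constants
  set C : ℝ := 2 * (K : ℝ) / lam + 1 with hC
  have hCpos : 0 < C := by positivity
  set μstar : ℝ := r / C with hμstar
  have hμstarpos : 0 < μstar := div_pos hr hCpos
  -- continuity of Jhat μ on B
  have hJc : Continuous J := by
    have : Continuous fun θ : EuclideanSpace ℝ (Fin n) =>
        Jstar + (1 / 2) * ⟪θ - θs, H (θ - θs)⟫ :=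
      continuous_const.add (continuous_const.mul
        ((continuous_id.sub continuous_const).inner
          (H.continuous.comp (continuous_id.sub continuous_const))))
    convert this using 1
    exact funext hJdef
  have hmin : ∀ μ : ℝ, ∃ a ∈ B, ∀ b ∈ B, Jhat μ a ≤ Jhat μ b := by
    intro μ
    have hcJ : ContinuousOn (Jhat μ) B := by
      intro θ hθ
      have hlog : ContinuousAt (fun θ => Real.log (h θ)) θ :=
        (Real.continuousAt_log (hposB θ hθ).ne').comp hhc.continuousAt
      have hrw : Jhat μ = fun θ => J θ - μ * Real.log (h θ) := funext (hJhatdef μ)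
      rw [hrw]
      exact ((hJc.continuousAt).sub (continuousAt_const.mul hlog)).continuousWithinAt
    obtain ⟨a, ha, hmin⟩ := (isCompact_closedBall θs r).exists_isMinOn ⟨θs, hθsB⟩ hcJ
    exact ⟨a, ha, fun b hb => hmin hb⟩
  choose θhat hθhatB hθhatmin using hmin
  refine ⟨μstar, hμstarpos, C, hCpos, θhat, ?_⟩
  rintro μ ⟨hμ0, hμlt⟩
  set a := θhat μ with ha
  have haB : a ∈ B := hθhatB μ
  have haS : a ∈ S := hBS haB
  -- the key quantitative bound
  have hdist : ‖a - θs‖ ≤ C * μ := by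
    have hcmp := hθhatmin μ θs hθsB
    rw [hJhatdef μ a, hJhatdef μ θs] at hcmp
    -- J a - J θs ≤ μ * (log h a - log h θs)
    have h1 : J a - J θs ≤ μ * (Real.log (h a) - Real.log (h θs)) := by linarith
    have hlip : Real.log (h a) - Real.log (h θs) ≤ (K : ℝ) * ‖a - θs‖ := by
      have := hK.dist_le_mul a (hBt haB) θs (hBt hθsB)
      rw [Real.dist_eq, dist_eq_norm] at this
      calc Real.log (h a) - Real.log (h θs) ≤ |Real.log (h a) - Real.log (h θs)| := le_abs_self _
        _ ≤ (K : ℝ) * ‖a - θs‖ := this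
    have hJlb : lam / 2 * ‖a - θs‖ ^ 2 ≤ J a - J θs := by
      rw [hJdef a, hJdef θs]
      have := hlb (a - θs)
      have hz : θs - θs = (0 : EuclideanSpace ℝ (Fin n)) := sub_self θs
      rw [hz]
      simp only [map_zero, inner_zero_right]
      linarith
    -- combine
    have hmain : lam / 2 * ‖a - θs‖ ^ 2 ≤ μ * ((K : ℝ) * ‖a - θs‖) := by
      calc lam / 2 * ‖a - θs‖ ^ 2 ≤ J a - J θs := hJlb
        _ ≤ μ * (Real.log (h a) - Real.log (h θs)) := h1
        _ ≤ μ * ((K : ℝ) * ‖a - θs‖) := by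
            exact mul_le_mul_of_nonneg_left hlip hμ0.le
    by_cases hd0 : ‖a - θs‖ = 0
    · rw [hd0]; positivity
    · have hdpos : 0 < ‖a - θs‖ := lt_of_le_of_ne (norm_nonneg _) (Ne.symm hd0)
      have h2 : lam / 2 * ‖a - θs‖ ≤ μ * (K : ℝ) := by
        have := le_of_mul_le_mul_right (by nlinarith : lam / 2 * ‖a - θs‖ * ‖a - θs‖ ≤ μ * (K : ℝ) * ‖a - θs‖) hdpos
        exact this
      have hKnn : (0 : ℝ) ≤ (K : ℝ) := K.coe_nonneg
      have h4 : lam * ‖a - θs‖ ≤ lam * (C * μ) := by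
        have hlC : lam * (C * μ) = 2 * (K : ℝ) * μ + lam * μ := by
          rw [hC]; field_simp
        rw [hlC]; nlinarith [mul_pos hlam hμ0]
      exact le_of_mul_le_mul_left h4 hlam
  have hlt : ‖a - θs‖ < r := by
    have : C * μ < C * μstar := by exact mul_lt_mul_of_pos_left hμlt hCpos
    have hCr : C * μstar = r := by
      rw [hμstar]; field_simp
    linarith
  -- local minimum
  have hBmem : B ∈ nhds a := by
    apply Metric.closedBall_mem_nhds_of_mem
    rw [Metric.mem_ball, dist_eq_norm]
    exact hlt
  have hlocmin : IsLocalMin (Jhat μ) a := by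
    refine Filter.eventually_of_mem hBmem ?_
    intro b hb
    exact hθhatmin μ b hb
  refine ⟨haS, hlocmin, ?_, hdist⟩
  unfold gradient
  rw [hlocmin.fderiv_eq_zero]
  simp
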